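/- Let G be a finitely generated profinite group and let 0 → M' → M → M'' → 0 be a short exact sequence of nonzero finite G-modules with finite cohomology. Define χ̄₁(G,A) = (dim H¹(G,A) − dim H⁰(G,A))/dim(A). Then χ̄₁(G,M) ≤ max{χ̄₁(G,M'), χ̄₁(G,M'')}. -/

import Mathlib

/-- The length of a finite abelian group as a `ℤ`-module: the number of prime factors
(with multiplicity) of its order. -/
noncomputable def lenZ (M : Type*) : ℕ := (Nat.card M).primeFactorsList.length

/-- The normalized partial Euler characteristic
`χ̄₁(G,A) = (dim H¹(G,A) − dim H⁰(G,A)) / dim A`. -/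
noncomputable def chiBar1 {G : Type} [Group G] (A : Rep ℤ G) : ℚ :=
  ((lenZ (groupCohomology A 1) : ℚ) - (lenZ (groupCohomology A 0) : ℚ)) / (lenZ A : ℚ)

/-- A profinite group is topologically finitely generated. -/
def TopFG (G : Type) [Group G] [TopologicalSpace G] [IsTopologicalGroup G] : Prop :=
  ∃ S : Finset G, (Subgroup.closure (S : Set G)).topologicalClosure = ⊤

open CategoryTheory groupCohomology

namespace ChiAux

/-! ### Arithmetic lemmas about Ω = number of prime factors with multiplicity -/

lemma omega_mul {m n : ℕ} (hm : m ≠ 0) (hn : n ≠ 0) :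
    (m * n).primeFactorsList.length =
      m.primeFactorsList.length + n.primeFactorsList.length := by
  rw [(Nat.perm_primeFactorsList_mul hm hn).length_eq, List.length_append]

lemma omega_dvd {a b : ℕ} (h : a ∣ b) (hb : b ≠ 0) :
    a.primeFactorsList.length ≤ b.primeFactorsList.length := by
  obtain ⟨c, rfl⟩ := h
  have ha : a ≠ 0 := fun h => by simp [h] at hb
  have hc : c ≠ 0 := fun h => by simp [h] at hb
  rw [omega_mul ha hc]; omega

/-! ### Counting for exact sequences of finite abelian groups -/

lemma card_eq_card_range_mul_card_ker {R A B : Type*} [Ring R] [AddCommGroup A]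
    [AddCommGroup B] [Module R A] [Module R B] (f : A →ₗ[R] B) :
    Nat.card A = Nat.card (LinearMap.range f) * Nat.card (LinearMap.ker f) := by
  rw [AddSubgroup.card_eq_card_quotient_mul_card_addSubgroup
      (AddMonoidHom.ker f.toAddMonoidHom)]
  congr 1
  · exact Nat.card_congr (QuotientAddGroup.quotientKerEquivRange f.toAddMonoidHom).toEquiv

lemma six_term_dvd {R : Type*} [Ring R] {A B C D E F : ModuleCat R}
    (f0 : A ⟶ B) (g0 : B ⟶ C) (d : C ⟶ D) (f1 : D ⟶ E) (g1 : E ⟶ F)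
    (hf0 : Function.Injective f0)
    (h1 : LinearMap.range f0.hom = LinearMap.ker g0.hom)
    (h2 : LinearMap.range g0.hom = LinearMap.ker d.hom)
    (h3 : LinearMap.range d.hom = LinearMap.ker f1.hom)
    (h4 : LinearMap.range f1.hom = LinearMap.ker g1.hom) :
    Nat.card E * (Nat.card A * Nat.card C) ∣ Nat.card B * (Nat.card D * Nat.card F) := by
  have hA : Nat.card A = Nat.card (LinearMap.range f0.hom) := by
    have h := card_eq_card_range_mul_card_ker f0.hom
    rw [LinearMap.ker_eq_bot.mpr hf0] at h
    simpa using h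
  have hB : Nat.card B = Nat.card (LinearMap.range g0.hom) * Nat.card (LinearMap.range f0.hom) := by
    rw [card_eq_card_range_mul_card_ker g0.hom, ← h1]
  have hC : Nat.card C = Nat.card (LinearMap.range d.hom) * Nat.card (LinearMap.range g0.hom) := by
    rw [card_eq_card_range_mul_card_ker d.hom, ← h2]
  have hD : Nat.card D = Nat.card (LinearMap.range f1.hom) * Nat.card (LinearMap.range d.hom) := by
    rw [card_eq_card_range_mul_card_ker f1.hom, ← h3]
  have hE : Nat.card E = Nat.card (LinearMap.range g1.hom) * Nat.card (LinearMap.range f1.hom) := by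
    rw [card_eq_card_range_mul_card_ker g1.hom, ← h4]
  have hF : Nat.card (LinearMap.range g1.hom) ∣ Nat.card F :=
    AddSubgroup.card_addSubgroup_dvd_card (LinearMap.range g1.hom).toAddSubgroup
  obtain ⟨s, hs⟩ := hF
  exact ⟨s, by rw [hA, hB, hC, hD, hE, hs]; ring⟩


/-- Multiplicativity of cardinality in a short exact sequence of modules. -/
lemma card_mul_of_ses {R : Type*} [Ring R] {A B C : ModuleCat R} (φ : A ⟶ B) (ψ : B ⟶ C)
    (hφ : Function.Injective φ) (hψ : Function.Surjective ψ)
    (h : Function.Exact φ ψ) :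
    Nat.card B = Nat.card C * Nat.card A := by
  rw [card_eq_card_range_mul_card_ker ψ.hom]
  congr 1
  · rw [LinearMap.range_eq_top.mpr hψ]
    exact Nat.card_congr Submodule.topEquiv.toEquiv
  · rw [LinearMap.exact_iff.mp h]
    exact Nat.card_congr (LinearEquiv.ofInjective φ.hom hφ).toEquiv.symm

/-! ### Functoriality of inhomogeneous cochains -/

universe u
variable {k G : Type u} [CommRing k] [Group G]

/-- The degreewise map on inhomogeneous cochains induced by a morphism of representations. -/
def cochainsMapF {A B : Rep k G} (φ : A ⟶ B) (n : ℕ) :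
    (inhomogeneousCochains A).X n ⟶ (inhomogeneousCochains B).X n :=
  ModuleCat.ofHom (LinearMap.compLeft φ.hom.toLinearMap (Fin n → G))

/-- Functoriality of the complex of inhomogeneous cochains. -/
def cochainsMap {A B : Rep k G} (φ : A ⟶ B) :
    inhomogeneousCochains A ⟶ inhomogeneousCochains B where
  f n := cochainsMapF φ n
  comm' i j hij := by
    obtain rfl : i + 1 = j := hij
    rw [inhomogeneousCochains.d_def, inhomogeneousCochains.d_def]
    refine ModuleCat.hom_ext (LinearMap.ext fun F => funext fun x => ?_)
    show inhomogeneousCochains.d B i (fun y => φ.hom (F y)) x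
      = φ.hom (inhomogeneousCochains.d A i F x)
    simp only [inhomogeneousCochains.d_hom_apply, map_add, map_sum, map_smul]
    congr 1
    exact (Rep.hom_comm_apply φ _ _).symm

lemma cochainsMap_comp_zero {A B C : Rep k G} (φ : A ⟶ B) (ψ : B ⟶ C)
    (hexact : Function.Exact φ.hom ψ.hom) :
    cochainsMap φ ≫ cochainsMap ψ = 0 := by
  apply HomologicalComplex.hom_ext
  intro n
  refine ModuleCat.hom_ext (LinearMap.ext fun F => funext fun x => ?_)
  show ψ.hom (φ.hom (F x)) = 0
  exact hexact.apply_apply_eq_zero (F x)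

/-- The short complex of cochain complexes attached to a short exact sequence of
representations. -/
noncomputable def cochainsSES {A B C : Rep k G} (φ : A ⟶ B) (ψ : B ⟶ C)
    (hexact : Function.Exact φ.hom ψ.hom) :
    ShortComplex (CochainComplex (ModuleCat k) ℕ) :=
  ShortComplex.mk (cochainsMap φ) (cochainsMap ψ) (cochainsMap_comp_zero φ ψ hexact)

lemma cochainsSES_shortExact {A B C : Rep k G} (φ : A ⟶ B) (ψ : B ⟶ C)
    (hφ : Function.Injective φ.hom) (hψ : Function.Surjective ψ.hom)
    (hexact : Function.Exact φ.hom ψ.hom) :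
    (cochainsSES φ ψ hexact).ShortExact := by
  apply HomologicalComplex.shortExact_of_degreewise_shortExact
  intro n
  have hmono : Mono ((cochainsSES φ ψ hexact).map
      (HomologicalComplex.eval (ModuleCat k) (ComplexShape.up ℕ) n)).f := by
    rw [ModuleCat.mono_iff_injective]
    intro F₁ F₂ h
    exact funext fun x => hφ (congrFun h x)
  have hepi : Epi ((cochainsSES φ ψ hexact).map
      (HomologicalComplex.eval (ModuleCat k) (ComplexShape.up ℕ) n)).g := by
    rw [ModuleCat.epi_iff_surjective]
    intro F
    choose w hw using fun x => hψ (F x)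
    exact ⟨w, funext hw⟩
  refine ⟨?_⟩
  · rw [ShortComplex.moduleCat_exact_iff]
    intro F hF
    choose w hw using fun x => (hexact (F x)).mp (congrFun hF x)
    exact ⟨w, funext hw⟩

end ChiAux

set_option maxHeartbeats 2000000 in
theorem stmt1 {G : Type} [Group G] [TopologicalSpace G] [IsTopologicalGroup G]
    [CompactSpace G] [TotallyDisconnectedSpace G] [T2Space G]
    (hfg : TopFG G)
    (M' M M'' : Rep ℤ G)
    -- the modules are finite discrete `G`-modules with continuous action
    [Finite M'] [Finite M] [Finite M'']
    (hcont' : ∀ a : M', IsOpen {g : G | M'.ρ g a = a})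
    (hcont : ∀ a : M, IsOpen {g : G | M.ρ g a = a})
    (hcont'' : ∀ a : M'', IsOpen {g : G | M''.ρ g a = a})
    -- `M'` and `M''` are nonzero
    (hne' : Nontrivial M') (hne'' : Nontrivial M'')
    -- a short exact sequence `0 → M' → M → M'' → 0`
    (f : M' ⟶ M) (g : M ⟶ M'')
    (hf : Function.Injective f.hom) (hg : Function.Surjective g.hom)
    (hfg' : Function.Exact f.hom g.hom)
    -- all cohomology groups in degrees ≤ 2 are finite
    (hfin' : ∀ i ≤ 2, Finite (groupCohomology M' i))
    (hfin : ∀ i ≤ 2, Finite (groupCohomology M i))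
    (hfin'' : ∀ i ≤ 2, Finite (groupCohomology M'' i)) :
    chiBar1 M ≤ max (chiBar1 M') (chiBar1 M'') := by
  classical
  have hS := ChiAux.cochainsSES_shortExact f g hf hg hfg'
  have hrel : (ComplexShape.up ℕ).Rel 0 1 := rfl
  have finH0' : Finite (groupCohomology M' 0) := hfin' 0 (by norm_num)
  have finH1' : Finite (groupCohomology M' 1) := hfin' 1 (by norm_num)
  have finH0 : Finite (groupCohomology M 0) := hfin 0 (by norm_num)
  have finH1 : Finite (groupCohomology M 1) := hfin 1 (by norm_num)
  have finH0'' : Finite (groupCohomology M'' 0) := hfin'' 0 (by norm_num)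
  have finH1'' : Finite (groupCohomology M'' 1) := hfin'' 1 (by norm_num)
  -- injectivity of `H⁰(M') → H⁰(M)`
  have hmonof : Mono ((ChiAux.cochainsSES f g hfg').f.f 0) := by
    rw [ModuleCat.mono_iff_injective]
    intro F₁ F₂ h
    exact funext fun x => hf (congrFun h x)
  have hmono : Function.Injective
      (HomologicalComplex.homologyMap (ChiAux.cochainsSES f g hfg').f 0) := by
    rw [← ModuleCat.mono_iff_injective]
    exact HomologicalComplex.mono_homologyMap_of_mono_of_not_rel _ 0
      (fun i h => Nat.succ_ne_zero i h)
  have h1 := (hS.homology_exact₂ 0).moduleCat_range_eq_ker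
  have h2 := (hS.homology_exact₃ 0 1 hrel).moduleCat_range_eq_ker
  have h3 := (hS.homology_exact₁ 0 1 hrel).moduleCat_range_eq_ker
  have h4 := (hS.homology_exact₂ 1).moduleCat_range_eq_ker
  have dvd := ChiAux.six_term_dvd
    (HomologicalComplex.homologyMap (ChiAux.cochainsSES f g hfg').f 0)
    (HomologicalComplex.homologyMap (ChiAux.cochainsSES f g hfg').g 0)
    (hS.δ 0 1 hrel)
    (HomologicalComplex.homologyMap (ChiAux.cochainsSES f g hfg').f 1)
    (HomologicalComplex.homologyMap (ChiAux.cochainsSES f g hfg').g 1)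
    hmono h1 h2 h3 h4
  have dvd' : Nat.card (groupCohomology M 1) *
        (Nat.card (groupCohomology M' 0) * Nat.card (groupCohomology M'' 0)) ∣
      Nat.card (groupCohomology M 0) *
        (Nat.card (groupCohomology M' 1) * Nat.card (groupCohomology M'' 1)) := dvd
  -- positivity of all cardinalities
  have cM1 : Nat.card (groupCohomology M 1) ≠ 0 := Nat.card_pos.ne'
  have cM0 : Nat.card (groupCohomology M 0) ≠ 0 := Nat.card_pos.ne'
  have cM'0 : Nat.card (groupCohomology M' 0) ≠ 0 := Nat.card_pos.ne'
  have cM'1 : Nat.card (groupCohomology M' 1) ≠ 0 := Nat.card_pos.ne'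
  have cM''0 : Nat.card (groupCohomology M'' 0) ≠ 0 := Nat.card_pos.ne'
  have cM''1 : Nat.card (groupCohomology M'' 1) ≠ 0 := Nat.card_pos.ne'
  have key : lenZ (groupCohomology M 1) +
        (lenZ (groupCohomology M' 0) + lenZ (groupCohomology M'' 0)) ≤
      lenZ (groupCohomology M 0) +
        (lenZ (groupCohomology M' 1) + lenZ (groupCohomology M'' 1)) := by
    have h := ChiAux.omega_dvd dvd' (mul_ne_zero cM0 (mul_ne_zero cM'1 cM''1))
    rw [ChiAux.omega_mul cM1 (mul_ne_zero cM'0 cM''0), ChiAux.omega_mul cM'0 cM''0,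
      ChiAux.omega_mul cM0 (mul_ne_zero cM'1 cM''1), ChiAux.omega_mul cM'1 cM''1] at h
    simpa [lenZ] using h
  -- multiplicativity of the order along the short exact sequence
  have cM' : Nat.card M' ≠ 0 := Nat.card_pos.ne'
  have cM'' : Nat.card M'' ≠ 0 := Nat.card_pos.ne'
  have hMcard : Nat.card M = Nat.card M'' * Nat.card M' :=
    ChiAux.card_mul_of_ses
      (ModuleCat.ofHom (AddMonoidHom.mk' (fun x => f.hom x) (map_add f.hom)).toIntLinearMap)
      (ModuleCat.ofHom (AddMonoidHom.mk' (fun x => g.hom x) (map_add g.hom)).toIntLinearMap)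
      hf hg hfg'
  have lenM : lenZ M = lenZ M'' + lenZ M' := by
    simp only [lenZ]
    rw [hMcard, ChiAux.omega_mul cM'' cM']
  -- positivity of the lengths of `M'` and `M''`
  have lz : ∀ n : ℕ, 1 < n → 1 ≤ n.primeFactorsList.length := by
    intro n hn
    by_contra h
    push_neg at h
    interval_cases hl : n.primeFactorsList.length
    rw [List.length_eq_zero_iff, Nat.primeFactorsList_eq_nil] at hl
    omega
  have lz' : 1 ≤ lenZ M' := lz _ (Finite.one_lt_card_iff_nontrivial.mpr hne')
  have lz'' : 1 ≤ lenZ M'' := lz _ (Finite.one_lt_card_iff_nontrivial.mpr hne'')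
  -- final arithmetic
  have hx : (0:ℚ) < (lenZ M' : ℚ) := by exact_mod_cast lz'
  have hy : (0:ℚ) < (lenZ M'' : ℚ) := by exact_mod_cast lz''
  have hxy : (0:ℚ) < (lenZ M : ℚ) := by
    rw [lenM]; push_cast; linarith
  have i1 : ((lenZ (groupCohomology M' 1) : ℚ) - lenZ (groupCohomology M' 0)) ≤
      max (chiBar1 M') (chiBar1 M'') * (lenZ M' : ℚ) :=
    (div_le_iff₀ hx).mp (le_max_left (chiBar1 M') (chiBar1 M''))
  have i2 : ((lenZ (groupCohomology M'' 1) : ℚ) - lenZ (groupCohomology M'' 0)) ≤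
      max (chiBar1 M') (chiBar1 M'') * (lenZ M'' : ℚ) :=
    (div_le_iff₀ hy).mp (le_max_right (chiBar1 M') (chiBar1 M''))
  have keyQ : (lenZ (groupCohomology M 1) : ℚ) +
        ((lenZ (groupCohomology M' 0) : ℚ) + (lenZ (groupCohomology M'' 0) : ℚ)) ≤
      (lenZ (groupCohomology M 0) : ℚ) +
        ((lenZ (groupCohomology M' 1) : ℚ) + (lenZ (groupCohomology M'' 1) : ℚ)) := by
    exact_mod_cast key
  have hmul : max (chiBar1 M') (chiBar1 M'') * (lenZ M : ℚ) =
      max (chiBar1 M') (chiBar1 M'') * (lenZ M'' : ℚ) +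
        max (chiBar1 M') (chiBar1 M'') * (lenZ M' : ℚ) := by
    rw [lenM]; push_cast; ring
  have goal : (lenZ (groupCohomology M 1) : ℚ) - lenZ (groupCohomology M 0) ≤
      max (chiBar1 M') (chiBar1 M'') * (lenZ M : ℚ) := by
    linarith [i1, i2, keyQ, hmul]
  exact (div_le_iff₀ hxy).mpr goal
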